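/- Let q be a real number with 0 < q < 1, let f(n) = ∑_{k=0}^d c_k n^k be a polynomial in n with rational coefficients c_k, and let a_n(q) be defined by the recurrence a_0(q) = 1 and a_n(q) = f(n) + (1 - q^{n-1}) a_{n-1}(q) for n ≥ 1. Then lim_{n→∞} ( ∑_{i=1}^n f(i) - a_n(q) ) = ∑_{n=1}^∞ (∑_{i=1}^n f(i)) q^n ∏_{j=n+1}^∞ (1 - q^j). -/

import Mathlib

open Filter Finset

private lemma acs_mult (q : ℝ) (hq0 : 0 < q) (hq1 : q < 1) (m : ℕ) :
    Multipliable (fun j : ℕ => 1 - q ^ (j + m + 1)) := by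
  have h1q : (0:ℝ) < 1 - q := by linarith
  have hle : ∀ j : ℕ, q ^ (j + m + 1) ≤ q := by
    intro j
    simpa using pow_le_pow_of_le_one hq0.le hq1.le (by omega : 1 ≤ j + m + 1)
  have hpos : ∀ j : ℕ, 0 < 1 - q ^ (j + m + 1) := fun j => by linarith [hle j]
  have hsum : Summable fun j : ℕ => Real.log (1 - q ^ (j + m + 1)) := by
    apply Summable.of_norm_bounded (g := fun j => (1 - q)⁻¹ * q ^ (j + m + 1))
    · have := (summable_geometric_of_lt_one hq0.le hq1).mul_left ((1 - q)⁻¹ * q ^ (m + 1))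
      apply this.congr
      intro j
      rw [show j + m + 1 = j + (m + 1) from by ring, pow_add]
      ring
    · intro j
      have hx0 : 0 < q ^ (j + m + 1) := pow_pos hq0 _
      have hxq : q ^ (j + m + 1) ≤ q := hle j
      have hp : 0 < 1 - q ^ (j + m + 1) := hpos j
      have h1 : Real.log (1 - q ^ (j + m + 1)) ≤ 0 :=
        Real.log_nonpos (by linarith) (by linarith)
      have h2 : 1 - (1 - q ^ (j + m + 1))⁻¹ ≤ Real.log (1 - q ^ (j + m + 1)) :=
        Real.one_sub_inv_le_log_of_pos hp
      rw [Real.norm_eq_abs, abs_of_nonpos h1]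
      have hu : (1 - q ^ (j + m + 1))⁻¹ ≤ (1 - q)⁻¹ := inv_anti₀ h1q (by linarith)
      have he : (1 - q ^ (j + m + 1))⁻¹ - 1 = (1 - q ^ (j + m + 1))⁻¹ * q ^ (j + m + 1) := by
        field_simp
        ring
      have hm : (1 - q ^ (j + m + 1))⁻¹ * q ^ (j + m + 1) ≤ (1 - q)⁻¹ * q ^ (j + m + 1) :=
        mul_le_mul_of_nonneg_right hu hx0.le
      linarith
  exact Real.multipliable_of_summable_log (f := fun j => 1 - q ^ (j + m + 1))
    (fun j => hpos j) hsum

private lemma acs_weier (x : ℕ → ℝ) (h0 : ∀ i, 0 ≤ x i) (h1 : ∀ i, x i ≤ 1) :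
    ∀ n : ℕ, 1 - ∑ i ∈ Finset.range n, x i ≤ ∏ i ∈ Finset.range n, (1 - x i) := by
  intro n
  induction n with
  | zero => simp
  | succ n ih =>
    rw [Finset.prod_range_succ, Finset.sum_range_succ]
    have hp : 0 ≤ ∏ i ∈ Finset.range n, (1 - x i) :=
      Finset.prod_nonneg fun i _ => by linarith [h1 i]
    have hs : 0 ≤ ∑ i ∈ Finset.range n, x i := Finset.sum_nonneg fun i _ => h0 i
    nlinarith [h0 n, h1 n]

private lemma acs_closed (q : ℝ) (f a : ℕ → ℝ) (ha0 : a 0 = 1)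
    (ha : ∀ n : ℕ, a (n + 1) = f (n + 1) + (1 - q ^ n) * a n) :
    ∀ n : ℕ, (∑ i ∈ Finset.Icc 1 (n + 1), f i) - a (n + 1)
      = ∑ m ∈ Finset.Ico 1 (n + 1), (∑ i ∈ Finset.Icc 1 m, f i) * q ^ m *
          ∏ j ∈ Finset.Ico (m + 1) (n + 1), (1 - q ^ j) := by
  intro n
  induction n with
  | zero => simp [ha 0, ha0]
  | succ n ih =>
    have h1 : ∀ m ∈ Finset.Ico 1 (n + 1),
        (∑ i ∈ Finset.Icc 1 m, f i) * q ^ m * ∏ j ∈ Finset.Ico (m + 1) (n + 1 + 1), (1 - q ^ j)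
        = ((∑ i ∈ Finset.Icc 1 m, f i) * q ^ m *
            ∏ j ∈ Finset.Ico (m + 1) (n + 1), (1 - q ^ j)) * (1 - q ^ (n + 1)) := by
      intro m hm
      rw [Finset.mem_Ico] at hm
      rw [Finset.prod_Ico_succ_top (by omega : m + 1 ≤ n + 1)]
      ring
    rw [Finset.sum_Icc_succ_top (by omega : 1 ≤ n + 1 + 1), ha (n + 1),
      Finset.sum_Ico_succ_top (by omega : 1 ≤ n + 1), Finset.sum_congr rfl h1,
      ← Finset.sum_mul, ← ih, Finset.Ico_self, Finset.prod_empty]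
    ring

theorem andrews_crippa_simon_limit (q : ℝ) (hq0 : 0 < q) (hq1 : q < 1)
    (d : ℕ) (c : ℕ → ℚ) (f : ℕ → ℝ)
    (hf : ∀ n : ℕ, f n = ∑ k ∈ Finset.range (d + 1), (c k : ℝ) * (n : ℝ) ^ k)
    (a : ℕ → ℝ) (ha0 : a 0 = 1)
    (ha : ∀ n : ℕ, a (n + 1) = f (n + 1) + (1 - q ^ n) * a n) :
    Filter.Tendsto (fun n : ℕ => (∑ i ∈ Finset.Icc 1 n, f i) - a n) Filter.atTop
      (nhds (∑' n : ℕ, (∑ i ∈ Finset.Icc 1 (n + 1), f i) * q ^ (n + 1) *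
        ∏' j : ℕ, (1 - q ^ (n + 2 + j)))) := by
  have h1q : (0:ℝ) < 1 - q := by linarith
  set S : ℕ → ℝ := fun n => ∑ i ∈ Finset.Icc 1 n, f i with hSdef
  set R : ℕ → ℝ := fun m => ∏' j : ℕ, (1 - q ^ (j + m + 1)) with hRdef
  -- basic facts about factors
  have hfac0 : ∀ j : ℕ, (0:ℝ) ≤ 1 - q ^ (j + 1) := by
    intro j
    have : q ^ (j + 1) ≤ q := by
      simpa using pow_le_pow_of_le_one hq0.le hq1.le (by omega : 1 ≤ j + 1)
    linarith
  have hfac1 : ∀ j : ℕ, (1:ℝ) - q ^ (j + 1) ≤ 1 := by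
    intro j
    have : (0:ℝ) ≤ q ^ (j + 1) := by positivity
    linarith
  have multR : ∀ m : ℕ, Multipliable (fun j : ℕ => 1 - q ^ (j + m + 1)) :=
    acs_mult q hq0 hq1
  -- partial products tend to R m
  have hRt : ∀ m : ℕ, Tendsto (fun k => ∏ i ∈ range k, (1 - q ^ (i + m + 1))) atTop (nhds (R m)) :=
    fun m => (multR m).hasProd.tendsto_prod_nat
  have hR0 : ∀ m : ℕ, 0 ≤ R m := by
    intro m
    refine ge_of_tendsto' (hRt m) fun k => Finset.prod_nonneg fun i _ => hfac0 (i + m)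
  have hR1 : ∀ m : ℕ, R m ≤ 1 := by
    intro m
    refine le_of_tendsto' (hRt m) fun k =>
      Finset.prod_le_one (fun i _ => hfac0 (i + m)) (fun i _ => hfac1 (i + m))
  -- lower bound for R and limit
  have hgeo : ∀ m : ℕ, Summable (fun i : ℕ => q ^ (i + m + 1)) := by
    intro m
    have := (summable_geometric_of_lt_one hq0.le hq1).mul_left (q ^ (m + 1))
    apply this.congr
    intro i
    rw [show i + m + 1 = i + (m + 1) from by ring, pow_add]
    ring
  have hRlow : ∀ m : ℕ, 1 - q ^ (m + 1) * (1 - q)⁻¹ ≤ R m := by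
    intro m
    refine ge_of_tendsto' (hRt m) fun k => ?_
    have hW := acs_weier (fun i => q ^ (i + m + 1))
      (fun i => by positivity)
      (fun i => by
        have : q ^ (i + m + 1) ≤ q := by
          simpa using pow_le_pow_of_le_one hq0.le hq1.le (by omega : 1 ≤ i + m + 1)
        linarith) k
    have hts : (∑ i ∈ range k, q ^ (i + m + 1)) ≤ ∑' i : ℕ, q ^ (i + m + 1) :=
      Summable.sum_le_tsum _ (fun i _ => by positivity) (hgeo m)
    have htv : (∑' i : ℕ, q ^ (i + m + 1)) = q ^ (m + 1) * (1 - q)⁻¹ := by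
      have h1 : (∑' i : ℕ, q ^ (i + m + 1)) = ∑' i : ℕ, q ^ (m + 1) * q ^ i := by
        apply tsum_congr
        intro i
        rw [show i + m + 1 = i + (m + 1) from by ring, pow_add]
        ring
      rw [h1, tsum_mul_left, tsum_geometric_of_lt_one hq0.le hq1]
    calc 1 - q ^ (m + 1) * (1 - q)⁻¹ ≤ 1 - ∑ i ∈ range k, q ^ (i + m + 1) := by
          rw [← htv]; linarith
      _ ≤ ∏ i ∈ range k, (1 - q ^ (i + m + 1)) := hW
  have hRlim : Tendsto R atTop (nhds 1) := by
    have hp : Tendsto (fun m : ℕ => q ^ m) atTop (nhds 0) :=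
      tendsto_pow_atTop_nhds_zero_of_lt_one hq0.le hq1
    have hD : Tendsto (fun m : ℕ => 1 - q ^ (m + 1) * (1 - q)⁻¹) atTop (nhds 1) := by
      have := ((hp.mul_const q).mul_const (1 - q)⁻¹).const_sub 1
      simp only [zero_mul, sub_zero] at this
      apply this.congr
      intro m
      rw [pow_succ]
    exact tendsto_of_tendsto_of_tendsto_of_le_of_le hD tendsto_const_nhds hRlow hR1
  -- splitting of R
  have hsplit : ∀ m k : ℕ, (∏ i ∈ range k, (1 - q ^ (i + m + 1))) * R (m + k) = R m := by
    intro m k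
    have hmk : Multipliable (fun n : ℕ => 1 - q ^ (n + k + m + 1)) := by
      have := multR (m + k)
      apply this.congr
      intro n
      rw [show n + (m + k) + 1 = n + k + m + 1 from by ring]
    have h2 : (∏' i : ℕ, (1 - q ^ (i + k + m + 1))) = R (m + k) := by
      apply tprod_congr
      intro i
      rw [show i + k + m + 1 = i + (m + k) + 1 from by ring]
    have := Multipliable.prod_mul_tprod_nat_mul' (f := fun j : ℕ => 1 - q ^ (j + m + 1)) (k := k) hmk
    rw [h2] at this
    exact this
  -- polynomial bound
  set A : ℝ := ∑ k ∈ Finset.range (d + 1), |(c k : ℝ)| with hAdef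
  have hA0 : 0 ≤ A := Finset.sum_nonneg fun k _ => abs_nonneg _
  set h : ℕ → ℝ := fun m => A * ((m:ℝ) ^ (d + 1) * q ^ m) with hhdef
  have hh0 : ∀ m, 0 ≤ h m := by
    intro m
    have : (0:ℝ) ≤ (m:ℝ) ^ (d + 1) * q ^ m := by positivity
    exact mul_nonneg hA0 this
  have sumh : Summable h := by
    have : ‖q‖ < 1 := by rw [Real.norm_eq_abs, abs_of_pos hq0]; exact hq1
    exact (summable_pow_mul_geometric_of_norm_lt_one (d + 1) this).mul_left A
  have hSb : ∀ m : ℕ, |S m| ≤ A * (m:ℝ) ^ (d + 1) := by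
    intro m
    rcases Nat.eq_zero_or_pos m with rfl | hm
    · simp [hSdef]
    · have hfb : ∀ i ∈ Finset.Icc 1 m, |f i| ≤ A * (m:ℝ) ^ d := by
        intro i hi
        rw [Finset.mem_Icc] at hi
        rw [hf i]
        calc |∑ k ∈ Finset.range (d + 1), (c k : ℝ) * (i : ℝ) ^ k|
            ≤ ∑ k ∈ Finset.range (d + 1), |(c k : ℝ) * (i : ℝ) ^ k| :=
              Finset.abs_sum_le_sum_abs _ _
          _ ≤ ∑ k ∈ Finset.range (d + 1), |(c k : ℝ)| * (m:ℝ) ^ d := by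
              apply Finset.sum_le_sum
              intro k hk
              rw [Finset.mem_range] at hk
              rw [abs_mul]
              apply mul_le_mul_of_nonneg_left _ (abs_nonneg _)
              rw [abs_of_nonneg (by positivity : (0:ℝ) ≤ (i:ℝ) ^ k)]
              calc (i:ℝ) ^ k ≤ (m:ℝ) ^ k := by
                    apply pow_le_pow_left₀ (by positivity) (by exact_mod_cast hi.2)
                _ ≤ (m:ℝ) ^ d := by
                    apply pow_le_pow_right₀ (by exact_mod_cast hm) (by omega)
          _ = A * (m:ℝ) ^ d := by rw [← Finset.sum_mul]
      calc |S m| ≤ ∑ i ∈ Finset.Icc 1 m, |f i| := Finset.abs_sum_le_sum_abs _ _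
        _ ≤ ∑ _i ∈ Finset.Icc 1 m, A * (m:ℝ) ^ d := Finset.sum_le_sum hfb
        _ = (m:ℝ) * (A * (m:ℝ) ^ d) := by
            rw [Finset.sum_const, Nat.card_Icc]
            simp [nsmul_eq_mul]
        _ = A * (m:ℝ) ^ (d + 1) := by ring
  -- the summable series g
  set g : ℕ → ℝ := fun m => S m * q ^ m * R m with hgdef
  have hgb : ∀ m, ‖g m‖ ≤ h m := by
    intro m
    rw [Real.norm_eq_abs, hgdef]
    calc |S m * q ^ m * R m| = |S m| * q ^ m * R m := by
          rw [abs_mul, abs_mul, abs_of_nonneg (by positivity : (0:ℝ) ≤ q ^ m),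
            abs_of_nonneg (hR0 m)]
      _ ≤ (A * (m:ℝ) ^ (d + 1)) * q ^ m * 1 := by
          apply mul_le_mul (mul_le_mul_of_nonneg_right (hSb m) (by positivity)) (hR1 m)
            (hR0 m) ?_
          have : (0:ℝ) ≤ (m:ℝ) ^ (d + 1) := by positivity
          positivity
      _ = h m := by rw [hhdef]; ring
  have sumg : Summable g := Summable.of_norm_bounded sumh hgb
  have hg0 : g 0 = 0 := by simp [hgdef, hSdef]
  -- partial sums of g tend to its tsum
  have hc : Tendsto (fun n => ∑ m ∈ range n, g m) atTop (nhds (∑' m, g m)) :=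
    sumg.hasSum.tendsto_sum_nat
  -- identify the target tsum
  have hTeq : (∑' n : ℕ, (∑ i ∈ Finset.Icc 1 (n + 1), f i) * q ^ (n + 1) *
      ∏' j : ℕ, (1 - q ^ (n + 2 + j))) = ∑' m, g m := by
    rw [Summable.tsum_eq_zero_add sumg, hg0, zero_add]
    apply tsum_congr
    intro n
    rw [hgdef]
    have hpe : (∏' j : ℕ, (1 - q ^ (n + 2 + j))) = R (n + 1) := by
      apply tprod_congr
      intro j
      rw [show n + 2 + j = j + (n + 1) + 1 from by ring]
    rw [hpe]
  -- the key error bound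
  set C : ℝ := ∑' m, h m with hCdef
  have key : ∀ n : ℕ, 1 ≤ n →
      ‖((S n - a n) - ∑ m ∈ range n, g m)‖ ≤ C * |1 - R (n - 1)| := by
    intro n hn
    obtain ⟨n', rfl⟩ : ∃ n', n = n' + 1 := ⟨n - 1, by omega⟩
    have hrange : (∑ m ∈ range (n' + 1), g m) = ∑ m ∈ Finset.Ico 1 (n' + 1), g m := by
      rw [Finset.range_eq_Ico, Finset.sum_eq_sum_Ico_succ_bot (by omega) g, hg0, zero_add]
    rw [hrange, hSdef]
    rw [acs_closed q f a ha0 ha n', ← Finset.sum_sub_distrib]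
    have hterm : ∀ m ∈ Finset.Ico 1 (n' + 1),
        ‖(∑ i ∈ Finset.Icc 1 m, f i) * q ^ m *
            (∏ j ∈ Finset.Ico (m + 1) (n' + 1), (1 - q ^ j)) - g m‖
          ≤ h m * |1 - R n'| := by
      intro m hm
      rw [Finset.mem_Ico] at hm
      set Q : ℝ := ∏ j ∈ Finset.Ico (m + 1) (n' + 1), (1 - q ^ j) with hQdef
      have hQr : Q = ∏ i ∈ range (n' + 1 - (m + 1)), (1 - q ^ (i + m + 1)) := by
        rw [hQdef, Finset.prod_Ico_eq_prod_range]
        apply Finset.prod_congr rfl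
        intro i _
        rw [show m + 1 + i = i + m + 1 from by ring]
      have hQ0 : 0 ≤ Q := by
        rw [hQr]; exact Finset.prod_nonneg fun i _ => hfac0 (i + m)
      have hQ1 : Q ≤ 1 := by
        rw [hQr]
        exact Finset.prod_le_one (fun i _ => hfac0 (i + m)) (fun i _ => hfac1 (i + m))
      have hRm : Q * R n' = R m := by
        have hx := hsplit m (n' + 1 - (m + 1))
        rw [show m + (n' + 1 - (m + 1)) = n' from by omega] at hx
        rw [hQr]
        exact hx
      have heq : (∑ i ∈ Finset.Icc 1 m, f i) * q ^ m * Q - g m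
          = ((∑ i ∈ Finset.Icc 1 m, f i) * q ^ m * Q) * (1 - R n') := by
        have hgm : g m = (∑ i ∈ Finset.Icc 1 m, f i) * q ^ m * R m := rfl
        rw [hgm, ← hRm]; ring
      rw [heq, Real.norm_eq_abs, abs_mul]
      apply mul_le_mul _ le_rfl (abs_nonneg _) (hh0 m)
      have hSm : |(∑ i ∈ Finset.Icc 1 m, f i)| = |S m| := rfl
      calc |(∑ i ∈ Finset.Icc 1 m, f i) * q ^ m * Q| = |S m| * q ^ m * Q := by
            rw [abs_mul, abs_mul, abs_of_nonneg (by positivity : (0:ℝ) ≤ q ^ m),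
              abs_of_nonneg hQ0, hSm]
        _ ≤ (A * (m:ℝ) ^ (d + 1)) * q ^ m * 1 := by
            apply mul_le_mul (mul_le_mul_of_nonneg_right (hSb m) (by positivity)) hQ1 hQ0 ?_
            have : (0:ℝ) ≤ (m:ℝ) ^ (d + 1) := by positivity
            positivity
        _ = h m := by rw [hhdef]; ring
    calc ‖∑ m ∈ Finset.Ico 1 (n' + 1),
          ((∑ i ∈ Finset.Icc 1 m, f i) * q ^ m *
            (∏ j ∈ Finset.Ico (m + 1) (n' + 1), (1 - q ^ j)) - g m)‖
        ≤ ∑ m ∈ Finset.Ico 1 (n' + 1),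
            ‖(∑ i ∈ Finset.Icc 1 m, f i) * q ^ m *
              (∏ j ∈ Finset.Ico (m + 1) (n' + 1), (1 - q ^ j)) - g m‖ :=
          norm_sum_le _ _
      _ ≤ ∑ m ∈ Finset.Ico 1 (n' + 1), h m * |1 - R n'| := Finset.sum_le_sum hterm
      _ = (∑ m ∈ Finset.Ico 1 (n' + 1), h m) * |1 - R n'| := by rw [← Finset.sum_mul]
      _ ≤ C * |1 - R n'| := by
          apply mul_le_mul_of_nonneg_right _ (abs_nonneg _)
          exact Summable.sum_le_tsum _ (fun m _ => hh0 m) sumh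
      _ = C * |1 - R (n' + 1 - 1)| := by norm_num
  have hB : Tendsto (fun n : ℕ => C * |1 - R (n - 1)|) atTop (nhds 0) := by
    have h1 : Tendsto (fun n : ℕ => R (n - 1)) atTop (nhds 1) :=
      hRlim.comp (tendsto_sub_atTop_nat 1)
    have h2 : Tendsto (fun n : ℕ => C * |1 - R (n - 1)|) atTop (nhds (C * |1 - 1|)) :=
      tendsto_const_nhds.mul ((tendsto_const_nhds.sub h1).abs)
    simpa using h2
  have hE : Tendsto (fun n => (S n - a n) - ∑ m ∈ range n, g m) atTop (nhds 0) := by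
    apply squeeze_zero_norm' _ hB
    filter_upwards [eventually_ge_atTop 1] with n hn
    exact key n hn
  have final : Tendsto (fun n => S n - a n) atTop (nhds ((∑' m, g m) + 0)) := by
    apply Tendsto.congr _ (hc.add hE)
    intro n
    ring
  rw [add_zero] at final
  rw [hTeq]
  exact final
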